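/- Let v ∈ ℝ^N with Σ_i v_i = 0, and let X ∈ ℝ^{N×N} be symmetric with 0 ⪯ X ⪯ I (positive semi-definite and I − X positive semi-definite) and XJ = 0. Then vᵀ Φ*(X) v ≤ vᵀ ( P_qᵀP_q + q²(Γ − PᵀP) ) v, where Γ is the diagonal matrix with Γ_{ii} = Σ_j p_{ji}. -/

import Mathlib

open Matrix BigOperators

/-- The map `Φ*(Y) = P_qᵀ Y P_q + q²(Ψ⁻(Pᵀ·Ψ(Y)) − Pᵀ Ψ⁻(Ψ(Y)) P)`,
where `P_q = (1−q)I + qP`. -/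
noncomputable def PhiStar {N : ℕ} (P : Matrix (Fin N) (Fin N) ℝ) (q : ℝ)
    (Y : Matrix (Fin N) (Fin N) ℝ) : Matrix (Fin N) (Fin N) ℝ :=
  ((1 - q) • (1 : Matrix (Fin N) (Fin N) ℝ) + q • P)ᵀ * Y *
      ((1 - q) • (1 : Matrix (Fin N) (Fin N) ℝ) + q • P)
    + q ^ 2 •
        (Matrix.diagonal (Pᵀ *ᵥ Matrix.diag Y)
          - Pᵀ * Matrix.diagonal (Matrix.diag Y) * P)

lemma phiStar_add {N : ℕ} (P : Matrix (Fin N) (Fin N) ℝ) (q : ℝ)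
    (A B : Matrix (Fin N) (Fin N) ℝ) :
    PhiStar P q (A + B) = PhiStar P q A + PhiStar P q B := by
  have hdiag : ∀ d1 d2 : Fin N → ℝ,
      Matrix.diagonal (d1 + d2) = Matrix.diagonal d1 + Matrix.diagonal d2 := by
    intro d1 d2; rw [Matrix.diagonal_add]; rfl
  unfold PhiStar
  simp only [Matrix.diag_add, Matrix.mulVec_add, hdiag,
    Matrix.mul_add, Matrix.add_mul, add_sub_add_comm, smul_add]
  abel

lemma phiStar_nonneg {N : ℕ} (P : Matrix (Fin N) (Fin N) ℝ)
    (hPnonneg : ∀ i j, 0 ≤ P i j) (hProw : ∀ i, ∑ j, P i j = 1)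
    (q : ℝ) (v : Fin N → ℝ)
    (Y : Matrix (Fin N) (Fin N) ℝ) (hY : Y.PosSemidef) :
    0 ≤ v ⬝ᵥ (PhiStar P q Y *ᵥ v) := by
  have hd : ∀ i, 0 ≤ Y.diag i := by
    intro i
    have := hY.dotProduct_mulVec_nonneg (Pi.single i 1)
    simpa [Matrix.mulVec, dotProduct, Pi.single_apply] using this
  unfold PhiStar
  rw [Matrix.add_mulVec, dotProduct_add]
  have hPt : ∀ w : Fin N → ℝ, v ⬝ᵥ (Pᵀ *ᵥ w) = (P *ᵥ v) ⬝ᵥ w := by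
    intro w
    rw [Matrix.dotProduct_mulVec, Matrix.vecMul_transpose]
  have h1 : 0 ≤ v ⬝ᵥ ((((1 - q) • (1 : Matrix (Fin N) (Fin N) ℝ) + q • P)ᵀ * Y *
      ((1 - q) • (1 : Matrix (Fin N) (Fin N) ℝ) + q • P)) *ᵥ v) := by
    set M := (1 - q) • (1 : Matrix (Fin N) (Fin N) ℝ) + q • P with hM
    have heq : v ⬝ᵥ ((Mᵀ * Y * M) *ᵥ v) = (M *ᵥ v) ⬝ᵥ (Y *ᵥ (M *ᵥ v)) := by
      rw [← Matrix.mulVec_mulVec, ← Matrix.mulVec_mulVec, Matrix.dotProduct_mulVec v Mᵀ,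
        Matrix.vecMul_transpose]
    rw [heq]
    simpa using hY.dotProduct_mulVec_nonneg (M *ᵥ v)
  have A1 : v ⬝ᵥ (Matrix.diagonal (Pᵀ *ᵥ Y.diag) *ᵥ v)
      = ∑ j, Y.diag j * ∑ i, P j i * v i ^ 2 := by
    have hw : ∀ i, (Pᵀ *ᵥ Y.diag) i = ∑ j, P j i * Y.diag j := by
      intro i; simp [Matrix.mulVec, dotProduct]
    calc v ⬝ᵥ (Matrix.diagonal (Pᵀ *ᵥ Y.diag) *ᵥ v)
        = ∑ i, ∑ j, Y.diag j * (P j i * v i ^ 2) := by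
          simp only [dotProduct, Matrix.mulVec_diagonal, hw]
          refine Finset.sum_congr rfl fun i _ => ?_
          rw [Finset.sum_mul, Finset.mul_sum]
          exact Finset.sum_congr rfl fun j _ => by ring
      _ = ∑ j, ∑ i, Y.diag j * (P j i * v i ^ 2) := Finset.sum_comm
      _ = ∑ j, Y.diag j * ∑ i, P j i * v i ^ 2 := by
          exact Finset.sum_congr rfl fun j _ => (Finset.mul_sum _ _ _).symm
  have A2 : v ⬝ᵥ ((Pᵀ * Matrix.diagonal Y.diag * P) *ᵥ v)
      = ∑ j, Y.diag j * (∑ i, P j i * v i) ^ 2 := by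
    rw [← Matrix.mulVec_mulVec, ← Matrix.mulVec_mulVec, hPt]
    simp only [dotProduct, Matrix.mulVec_diagonal]
    apply Finset.sum_congr rfl
    intro j _
    rw [show (P *ᵥ v) j = ∑ i, P j i * v i from rfl]
    ring
  have h2 : 0 ≤ v ⬝ᵥ ((q ^ 2 • (Matrix.diagonal (Pᵀ *ᵥ Matrix.diag Y)
          - Pᵀ * Matrix.diagonal (Matrix.diag Y) * P)) *ᵥ v) := by
    rw [Matrix.smul_mulVec, dotProduct_smul, smul_eq_mul]
    apply mul_nonneg (sq_nonneg q)
    rw [Matrix.sub_mulVec, dotProduct_sub, A1, A2, ← Finset.sum_sub_distrib]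
    apply Finset.sum_nonneg
    intro j _
    rw [← mul_sub]
    apply mul_nonneg (hd j)
    rw [sub_nonneg]
    have hcs := Finset.sum_sq_le_sum_mul_sum_of_sq_eq_mul Finset.univ
      (r := fun i => P j i * v i) (f := fun i => P j i) (g := fun i => P j i * v i ^ 2)
      (fun i _ => hPnonneg j i) (fun i _ => mul_nonneg (hPnonneg j i) (sq_nonneg _))
      (fun i _ => by ring)
    calc (∑ i, P j i * v i) ^ 2 ≤ (∑ i, P j i) * ∑ i, P j i * v i ^ 2 := hcs
      _ = ∑ i, P j i * v i ^ 2 := by rw [hProw j, one_mul]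
  linarith

/-- For `v ⊥ 𝟙` and symmetric `X` with `0 ⪯ X ⪯ I` and `XJ = 0`,
`vᵀ Φ*(X) v ≤ vᵀ (P_qᵀP_q + q²(Γ − PᵀP)) v`, where `Γᵢᵢ = ∑ⱼ p_{ji}`. -/
theorem stmt10 (N : ℕ) (hN : 1 ≤ N) (P : Matrix (Fin N) (Fin N) ℝ)
    (hPnonneg : ∀ i j, 0 ≤ P i j) (hProw : ∀ i, ∑ j, P i j = 1)
    (q : ℝ) (hq0 : 0 ≤ q) (hq1 : q ≤ 1)
    (v : Fin N → ℝ) (hv : ∑ i, v i = 0)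
    (X : Matrix (Fin N) (Fin N) ℝ) (hXsymm : Xᵀ = X)
    (hXpos : X.PosSemidef) (hXle : ((1 : Matrix (Fin N) (Fin N) ℝ) - X).PosSemidef)
    (hXJ : X * (Matrix.of fun _ _ => (N : ℝ)⁻¹) = 0) :
    v ⬝ᵥ (PhiStar P q X *ᵥ v)
      ≤ v ⬝ᵥ ((((1 - q) • (1 : Matrix (Fin N) (Fin N) ℝ) + q • P)ᵀ *
            ((1 - q) • (1 : Matrix (Fin N) (Fin N) ℝ) + q • P)
          + q ^ 2 • (Matrix.diagonal (fun i => ∑ j, P j i) - Pᵀ * P)) *ᵥ v) := by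
  have hone : PhiStar P q (1 : Matrix (Fin N) (Fin N) ℝ)
      = (((1 - q) • (1 : Matrix (Fin N) (Fin N) ℝ) + q • P)ᵀ *
            ((1 - q) • (1 : Matrix (Fin N) (Fin N) ℝ) + q • P)
          + q ^ 2 • (Matrix.diagonal (fun i => ∑ j, P j i) - Pᵀ * P)) := by
    unfold PhiStar
    have e1 : Pᵀ *ᵥ Matrix.diag (1 : Matrix (Fin N) (Fin N) ℝ)
        = fun i => ∑ j, P j i := by
      ext i
      simp [Matrix.mulVec, dotProduct, Matrix.diag, Matrix.one_apply]
    have e2 : Matrix.diagonal (Matrix.diag (1 : Matrix (Fin N) (Fin N) ℝ))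
        = (1 : Matrix (Fin N) (Fin N) ℝ) := by
      rw [Matrix.diag_one]; exact Matrix.diagonal_one
    rw [Matrix.mul_one, e1, e2, Matrix.mul_one]
  have hsplit : PhiStar P q (1 : Matrix (Fin N) (Fin N) ℝ)
      = PhiStar P q X + PhiStar P q ((1 : Matrix (Fin N) (Fin N) ℝ) - X) := by
    have h1X : X + ((1 : Matrix (Fin N) (Fin N) ℝ) - X) = 1 := by abel
    conv_lhs => rw [← h1X]
    rw [phiStar_add]
  have hnn := phiStar_nonneg P hPnonneg hProw q v _ hXle
  rw [← hone, hsplit, Matrix.add_mulVec, dotProduct_add]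
  linarith
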